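/- Let K ≥ 1, let A₁, …, A_K : ℝ → ℂ be continuous, let φ₁, …, φ_K : ℝ → ℝ be continuously differentiable, and set f(t) = Σ_{j=1}^{K} A_j(t) e^{iφ_j(t)} and f_j(t) = A_j(t) e^{iφ_j(t)}. Let t* ∈ ℝ and α, Δ > 0 be such that for every j and every u with |u| ≤ Δ: |A_j(t*+u) − A_j(t*)| ≤ α|u| |A_j(t*)| and |φ_j'(t*+u) − φ_j'(t*)| ≤ α|u| |φ_j'(t*)|. Set M = Σ_{j=1}^{K} |A_j(t*)| and B = max_{1≤j≤K} |φ_j'(t*)|. Then for every u with |u| ≤ Δ, | f(t*+u) − Σ_{j=1}^{K} f_j(t*) e^{iφ_j'(t*) u} | ≤ α M (BΔ + 1) Δ. -/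

import Mathlib

lemma exp_I_lip (x y : ℝ) :
    ‖Complex.exp (Complex.I * x) - Complex.exp (Complex.I * y)‖ ≤ |x - y| := by
  have hd : ∀ z : ℝ, HasDerivAt (fun s : ℝ => Complex.exp (Complex.I * s))
      (Complex.I * Complex.exp (Complex.I * z)) z := by
    intro z
    have h1 : HasDerivAt (fun s : ℝ => (Complex.I * s : ℂ)) Complex.I z := by
      simpa using ((Complex.ofRealCLM.hasDerivAt (x := z)).const_mul Complex.I)
    exact ((Complex.hasDerivAt_exp (Complex.I * z)).comp z h1).congr_deriv (mul_comm _ _)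
  have := Convex.norm_image_sub_le_of_norm_hasDerivWithin_le
    (f := fun s : ℝ => Complex.exp (Complex.I * s))
    (f' := fun z : ℝ => Complex.I * Complex.exp (Complex.I * z)) (C := 1)
    (s := Set.univ)
    (fun z _ => (hd z).hasDerivWithinAt)
    (fun z _ => by
      rw [norm_mul, Complex.norm_I, one_mul]
      rw [show Complex.I * z = (z : ℂ) * Complex.I by ring]
      simp [Complex.norm_exp])
    convex_univ (Set.mem_univ y) (Set.mem_univ x)
  simpa [Real.norm_eq_abs] using this

/-- reduction of a superposition of AM–FM components to the constant
parameter case on a small interval around `t*`. -/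
theorem reduction_to_constant_parameters
    (K : ℕ) (hK : 1 ≤ K)
    (A : Fin K → ℝ → ℂ) (hA : ∀ j, Continuous (A j))
    (φ : Fin K → ℝ → ℝ) (hφ : ∀ j, ContDiff ℝ 1 (φ j))
    (f : ℝ → ℂ) (hf : ∀ t, f t = ∑ j, A j t * Complex.exp (Complex.I * (φ j t : ℂ)))
    (fc : Fin K → ℝ → ℂ)
    (hfc : ∀ j t, fc j t = A j t * Complex.exp (Complex.I * (φ j t : ℂ)))
    (tstar : ℝ) (α Δ : ℝ) (hα : 0 < α) (hΔ : 0 < Δ)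
    (hAslow : ∀ j, ∀ u : ℝ, |u| ≤ Δ →
      ‖A j (tstar + u) - A j tstar‖ ≤ α * |u| * ‖A j tstar‖)
    (hφslow : ∀ j, ∀ u : ℝ, |u| ≤ Δ →
      |deriv (φ j) (tstar + u) - deriv (φ j) tstar| ≤ α * |u| * |deriv (φ j) tstar|)
    (M : ℝ) (hM : M = ∑ j, ‖A j tstar‖)
    (B : ℝ) (hB : (∀ j, |deriv (φ j) tstar| ≤ B) ∧ ∃ j, |deriv (φ j) tstar| = B) :
    ∀ u : ℝ, |u| ≤ Δ →
      ‖f (tstar + u) -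
          ∑ j, fc j tstar * Complex.exp (Complex.I * ((deriv (φ j) tstar * u : ℝ) : ℂ))‖
        ≤ α * M * (B * Δ + 1) * Δ := by
  intro u hu
  have hB0 : 0 ≤ B := by
    obtain ⟨j, hj⟩ := hB.2
    exact hj ▸ abs_nonneg _
  -- Taylor bound on φ j
  have hphi : ∀ j : Fin K,
      |φ j (tstar + u) - φ j tstar - deriv (φ j) tstar * u| ≤ α * Δ * B * Δ := by
    intro j
    have hdiff : ∀ x : ℝ, HasDerivAt (φ j) (deriv (φ j) x) x :=
      fun x => ((hφ j).differentiable one_ne_zero x).hasDerivAt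
    have key := Convex.norm_image_sub_le_of_norm_hasDerivWithin_le
      (f := fun s : ℝ => φ j (tstar + s) - deriv (φ j) tstar * s)
      (f' := fun s : ℝ => deriv (φ j) (tstar + s) - deriv (φ j) tstar)
      (C := α * Δ * B) (s := Set.uIcc 0 u)
      (fun s _ => by
        have h1 : HasDerivAt (fun s : ℝ => φ j (tstar + s)) (deriv (φ j) (tstar + s)) s := by
          have := (hdiff (tstar + s)).comp s ((hasDerivAt_id s).const_add tstar)
          exact this.congr_deriv (mul_one _)
        exact ((h1.sub ((hasDerivAt_id s).const_mul (deriv (φ j) tstar))).congr_deriv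
          (by simp)).hasDerivWithinAt)
      (fun s hs => by
        have hsu : |s| ≤ |u| := by
          rcases Set.mem_uIcc.1 hs with h | h
          · rw [abs_of_nonneg h.1]; exact le_trans h.2 (le_abs_self u)
          · rw [abs_of_nonpos h.2]; exact le_trans (neg_le_neg h.1) (neg_le_abs u)
        have hsΔ : |s| ≤ Δ := hsu.trans hu
        calc ‖deriv (φ j) (tstar + s) - deriv (φ j) tstar‖
            ≤ α * |s| * |deriv (φ j) tstar| := hφslow j s hsΔ
          _ ≤ α * Δ * B := by
              apply mul_le_mul (mul_le_mul le_rfl hsΔ (abs_nonneg _) hα.le) (hB.1 j)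
                (abs_nonneg _) (by positivity))
      (convex_uIcc 0 u) (Set.left_mem_uIcc) (Set.right_mem_uIcc)
    simp only [mul_zero, sub_zero, add_zero, Real.norm_eq_abs] at key
    calc |φ j (tstar + u) - φ j tstar - deriv (φ j) tstar * u|
        = |φ j (tstar + u) - deriv (φ j) tstar * u - φ j tstar| := by ring_nf
      _ ≤ α * Δ * B * |u| := key
      _ ≤ α * Δ * B * Δ := mul_le_mul_of_nonneg_left hu (by positivity)
  -- termwise bound
  have hterm : ∀ j : Fin K,
      ‖A j (tstar + u) * Complex.exp (Complex.I * (φ j (tstar + u) : ℂ)) -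
        fc j tstar * Complex.exp (Complex.I * ((deriv (φ j) tstar * u : ℝ) : ℂ))‖
      ≤ ‖A j tstar‖ * (α * (B * Δ + 1) * Δ) := by
    intro j
    rw [hfc]
    set x := φ j (tstar + u)
    set y := φ j tstar + deriv (φ j) tstar * u with hy
    have hexp : A j tstar * Complex.exp (Complex.I * (φ j tstar : ℂ)) *
        Complex.exp (Complex.I * ((deriv (φ j) tstar * u : ℝ) : ℂ))
        = A j tstar * Complex.exp (Complex.I * (y : ℂ)) := by
      rw [mul_assoc, ← Complex.exp_add]
      push_cast [hy]
      ring_nf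
    rw [hexp]
    have split : A j (tstar + u) * Complex.exp (Complex.I * (x : ℂ)) -
        A j tstar * Complex.exp (Complex.I * (y : ℂ))
        = (A j (tstar + u) - A j tstar) * Complex.exp (Complex.I * (x : ℂ)) +
          A j tstar * (Complex.exp (Complex.I * (x : ℂ)) - Complex.exp (Complex.I * (y : ℂ))) := by
      ring
    rw [split]
    have habs_exp : ‖Complex.exp (Complex.I * (x : ℂ))‖ = 1 := by
      rw [show Complex.I * (x:ℂ) = (x:ℂ) * Complex.I by ring]
      simp [Complex.norm_exp]
    calc ‖_‖ ≤ ‖(A j (tstar + u) - A j tstar) * Complex.exp (Complex.I * (x : ℂ))‖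
          + ‖A j tstar * (Complex.exp (Complex.I * (x : ℂ)) - Complex.exp (Complex.I * (y : ℂ)))‖ :=
          norm_add_le _ _
      _ = ‖A j (tstar + u) - A j tstar‖
          + ‖A j tstar‖ * ‖Complex.exp (Complex.I * (x : ℂ)) - Complex.exp (Complex.I * (y : ℂ))‖ := by
          rw [norm_mul, habs_exp, mul_one, norm_mul]
      _ ≤ α * |u| * ‖A j tstar‖ + ‖A j tstar‖ * (α * Δ * B * Δ) := by
          gcongr
          · exact hAslow j u hu
          · exact (exp_I_lip x y).trans (by simpa [hy, sub_sub] using hphi j)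
      _ ≤ ‖A j tstar‖ * (α * (B * Δ + 1) * Δ) := by
          have h1 : α * |u| * ‖A j tstar‖ ≤ α * Δ * ‖A j tstar‖ := by
            gcongr
          nlinarith [norm_nonneg (A j tstar), hα.le, hB0, hΔ.le,
            mul_nonneg (norm_nonneg (A j tstar)) (mul_nonneg hα.le hΔ.le)]
  -- assemble
  rw [hf, ← Finset.sum_sub_distrib]
  calc ‖∑ j, (A j (tstar + u) * Complex.exp (Complex.I * (φ j (tstar + u) : ℂ)) -
          fc j tstar * Complex.exp (Complex.I * ((deriv (φ j) tstar * u : ℝ) : ℂ)))‖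
      ≤ ∑ j, ‖A j (tstar + u) * Complex.exp (Complex.I * (φ j (tstar + u) : ℂ)) -
          fc j tstar * Complex.exp (Complex.I * ((deriv (φ j) tstar * u : ℝ) : ℂ))‖ :=
        norm_sum_le _ _
    _ ≤ ∑ j, ‖A j tstar‖ * (α * (B * Δ + 1) * Δ) :=
        Finset.sum_le_sum (fun j _ => hterm j)
    _ = α * M * (B * Δ + 1) * Δ := by
        rw [← Finset.sum_mul, ← hM]; ring
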